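/- Let σ, ν, μ be Minkowski velocities with ⟨μ,ν⟩ > 0 and ⟨σ,ν+σ⟩ ≠ 0, and define the Einstein–Oziewicz relative velocity ε := (c²/⟨μ,ν⟩)·[μ − (⟨μ,ν+σ⟩/⟨σ,ν+σ⟩)·(ν + σ)] + σ. Then the passive covariant Lorentz boost of μ equals the Einstein–Minkowski relative velocity built from ε: Lp(σ,ν)μ = (ε + σ)/√(1 + ⟨ε,ε⟩/c²). -/

import Mathlib

noncomputable section

/-- Minkowski bilinear form on ℝ⁴ with signature +−−−. -/
def mink (u v : Fin 4 → ℝ) : ℝ := u 0 * v 0 - u 1 * v 1 - u 2 * v 2 - u 3 * v 3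

/-- Passive covariant Lorentz boost determined by Minkowski velocities σ, ν. -/
def Lp (c : ℝ) (σ ν μ : Fin 4 → ℝ) : Fin 4 → ℝ :=
  μ - (mink μ (ν + σ) / mink σ (ν + σ)) • (ν + σ) + (2 * mink μ ν / c ^ 2) • σ

lemma mink_comm (u v : Fin 4 → ℝ) : mink u v = mink v u := by simp [mink]; ring

lemma mink_add_left (u v w : Fin 4 → ℝ) : mink (u + v) w = mink u w + mink v w := by
  simp [mink]; ring

lemma mink_sub_left (u v w : Fin 4 → ℝ) : mink (u - v) w = mink u w - mink v w := by
  simp [mink]; ring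

lemma mink_smul_left (a : ℝ) (u v : Fin 4 → ℝ) : mink (a • u) v = a * mink u v := by
  simp [mink]; ring

lemma mink_add_right (u v w : Fin 4 → ℝ) : mink u (v + w) = mink u v + mink u w := by
  simp [mink]; ring

lemma mink_sub_right (u v w : Fin 4 → ℝ) : mink u (v - w) = mink u v - mink u w := by
  simp [mink]; ring

lemma mink_smul_right (a : ℝ) (u v : Fin 4 → ℝ) : mink u (a • v) = a * mink u v := by
  simp [mink]; ring

theorem passive_boost_eq_einstein_minkowski (c : ℝ) (hc : 0 < c) (σ ν μ : Fin 4 → ℝ)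
    (hσ : mink σ σ = c ^ 2) (hν : mink ν ν = c ^ 2) (hμ : mink μ μ = c ^ 2)
    (hμν : 0 < mink μ ν) (hσνσ : mink σ (ν + σ) ≠ 0)
    (ε : Fin 4 → ℝ)
    (hε : ε = (c ^ 2 / mink μ ν) •
        (μ - (mink μ (ν + σ) / mink σ (ν + σ)) • (ν + σ)) + σ) :
    Lp c σ ν μ = (Real.sqrt (1 + mink ε ε / c ^ 2))⁻¹ • (ε + σ) := by
  set m := mink μ ν with hm
  set s := mink σ (ν + σ) with hs
  set k := mink μ (ν + σ) with hk
  have hm0 : m ≠ 0 := ne_of_gt hμν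
  have hc2 : c ^ 2 ≠ 0 := by positivity
  set A : Fin 4 → ℝ := μ - (k / s) • (ν + σ) with hA
  -- ⟨ν+σ, ν+σ⟩ = 2 s
  have hνσ : mink (ν + σ) (ν + σ) = 2 * s := by
    rw [hs, mink_add_left, mink_add_right, mink_add_right, hν, hσ, mink_comm ν σ]
    ring
  have hAA : mink A A = c ^ 2 := by
    rw [hA]
    simp only [mink_sub_left, mink_sub_right, mink_smul_left, mink_smul_right]
    rw [hμ, hνσ, mink_comm (ν + σ) μ, ← hk]
    field_simp
    ring
  have hAσ : mink A σ = -m := by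
    have h1 : mink (ν + σ) σ = s := by rw [hs, mink_comm]
    have h2 : mink μ σ = k - m := by
      have := mink_add_right μ ν σ
      rw [← hk, ← hm] at this; linarith
    rw [hA, mink_sub_left, mink_smul_left, h1, h2]
    field_simp
    ring
  have hεε : mink ε ε = c ^ 6 / m ^ 2 - c ^ 2 := by
    rw [hε]
    simp only [mink_add_left, mink_add_right, mink_smul_left, mink_smul_right]
    rw [hAA, hAσ, mink_comm σ A, hAσ, hσ]
    field_simp
    ring
  have h1 : 1 + mink ε ε / c ^ 2 = (c ^ 2 / m) ^ 2 := by
    rw [hεε]; field_simp; ring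
  have hsqrt : Real.sqrt (1 + mink ε ε / c ^ 2) = c ^ 2 / m := by
    rw [h1, Real.sqrt_sq (by positivity : (0:ℝ) ≤ c ^ 2 / m)]
  rw [hsqrt]
  funext i
  simp only [hε, hA, Lp, ← hm, ← hs, ← hk, Pi.add_apply, Pi.sub_apply, Pi.smul_apply,
    smul_eq_mul]
  field_simp
  ring
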